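/- The determinant of the Hessian of $f(a,b) := 4 + \frac{1}{2}\big(ab - 2a - 2b - \sqrt{ab(4-a)(4-b)}\big)$ at any point $(a,b)$ with $a, b > 0$ and $a + b < 4$ equals $\frac{16 - \big(\frac{1}{2}(\sqrt{(4-a)(4-b)} - \sqrt{ab})^2 - 4\big)^2}{4ab(4-a)(4-b)}$, which is strictly positive. -/

import Mathlib

open Real Filter

noncomputable def f (a b : ℝ) : ℝ :=
  4 + 1 / 2 * (a * b - 2 * a - 2 * b - Real.sqrt (a * b * (4 - a) * (4 - b)))

noncomputable def g (x : ℝ) : ℝ := Real.sqrt (x * (4 - x))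

lemma g_pos {x : ℝ} (h1 : 0 < x) (h2 : x < 4) : 0 < g x :=
  Real.sqrt_pos.2 (by nlinarith)

lemma g_sq {x : ℝ} (h1 : 0 ≤ x) (h2 : x ≤ 4) : g x ^ 2 = x * (4 - x) :=
  Real.sq_sqrt (by nlinarith)

lemma g_hasDeriv {x : ℝ} (h1 : 0 < x) (h2 : x < 4) :
    HasDerivAt g ((2 - x) / g x) x := by
  have hne : x * (4 - x) ≠ 0 := by nlinarith
  have h := HasDerivAt.sqrt ((hasDerivAt_id x).mul
    ((hasDerivAt_const x (4:ℝ)).sub (hasDerivAt_id x))) hne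
  convert h using 1
  · rfl
  have := (g_pos h1 h2).ne'
  unfold g at *
  simp only [Pi.mul_apply, Pi.sub_apply, id]
  field_simp
  ring

lemma gd_hasDeriv {x : ℝ} (h1 : 0 < x) (h2 : x < 4) :
    HasDerivAt (fun y => (2 - y) / g y) (-4 / g x ^ 3) x := by
  have hgne := (g_pos h1 h2).ne'
  have h := HasDerivAt.div ((hasDerivAt_const x (2:ℝ)).sub (hasDerivAt_id x))
    (g_hasDeriv h1 h2) hgne
  convert h using 1
  · rfl
  · rfl
  · rfl
  have hsq := g_sq h1.le h2.le
  simp only [Pi.sub_apply, id]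
  field_simp
  linear_combination hsq

lemma sqrt_split {x y : ℝ} (hx : 0 ≤ x) (hx4 : x ≤ 4) :
    Real.sqrt (x * y * (4 - x) * (4 - y)) = g x * g y := by
  unfold g
  rw [← Real.sqrt_mul (by nlinarith)]
  ring_nf

lemma f_symm (x y : ℝ) : f x y = f y x := by
  unfold f
  rw [show x * y * (4 - x) * (4 - y) = y * x * (4 - y) * (4 - x) from by ring]
  ring

lemma f_deriv1 {x y : ℝ} (hx1 : 0 < x) (hx2 : x < 4) (hy1 : 0 < y) (hy2 : y < 4) :
    HasDerivAt (fun x' => f x' y) (1/2 * (y - 2 - (2 - x) / g x * g y)) x := by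
  have heq : (fun x' => f x' y) =ᶠ[nhds x]
      fun x' => 4 + 1/2 * (x' * y - 2 * x' - 2 * y - g x' * g y) := by
    filter_upwards [Ioo_mem_nhds hx1 hx2] with z hz
    unfold f
    rw [sqrt_split hz.1.le hz.2.le]
  have h1 : HasDerivAt (fun x' => x' * y - 2 * x' - 2 * y - g x' * g y)
      (y - 2 - (2 - x) / g x * g y) x := by
    have h := ((((hasDerivAt_id x).mul_const y).sub
      ((hasDerivAt_id x).const_mul 2)).sub (hasDerivAt_const x (2*y))).sub
      ((g_hasDeriv hx1 hx2).mul_const (g y))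
    convert h using 1
    · rfl
    · rfl
    · rfl
    ring
  have h2 := (h1.const_mul (1/2 : ℝ)).const_add 4
  exact h2.congr_of_eventuallyEq heq

lemma f_deriv2 {x y : ℝ} (hx1 : 0 < x) (hx2 : x < 4) (hy1 : 0 < y) (hy2 : y < 4) :
    HasDerivAt (fun y' => f x y') (1/2 * (x - 2 - (2 - y) / g y * g x)) y := by
  have h := f_deriv1 hy1 hy2 hx1 hx2
  exact h.congr_of_eventuallyEq (by filter_upwards with z using f_symm x z)

set_option maxHeartbeats 1000000 in
theorem stmt_12 (a b : ℝ) (ha : 0 < a) (hb : 0 < b) (hab : a + b < 4) :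
    deriv (fun x => deriv (fun x' => f x' b) x) a *
        deriv (fun y => deriv (fun y' => f a y') y) b -
      deriv (fun y => deriv (fun x => f x y) a) b *
        deriv (fun x => deriv (fun y => f x y) b) a
      = (16 - (1 / 2 * (Real.sqrt ((4 - a) * (4 - b)) - Real.sqrt (a * b)) ^ 2 - 4) ^ 2) /
          (4 * a * b * (4 - a) * (4 - b)) ∧
    0 < (16 - (1 / 2 * (Real.sqrt ((4 - a) * (4 - b)) - Real.sqrt (a * b)) ^ 2 - 4) ^ 2) /
          (4 * a * b * (4 - a) * (4 - b)) := by
  have ha4 : a < 4 := by linarith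
  have hb4 : b < 4 := by linarith
  have hga := g_pos ha ha4
  have hgb := g_pos hb hb4
  -- second derivatives
  have h1 : deriv (fun x => deriv (fun x' => f x' b) x) a = 2 * g b / g a ^ 3 := by
    have heq : (fun x => deriv (fun x' => f x' b) x) =ᶠ[nhds a]
        fun x => 1/2 * (b - 2 - (2 - x) / g x * g b) := by
      filter_upwards [Ioo_mem_nhds ha ha4] with z hz
      exact (f_deriv1 hz.1 hz.2 hb hb4).deriv
    rw [heq.deriv_eq]
    have h := (((gd_hasDeriv ha ha4).mul_const (g b)).const_sub (b - 2)).const_mul (1/2 : ℝ)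
    rw [h.deriv]
    field_simp
    ring
  have h2 : deriv (fun y => deriv (fun y' => f a y') y) b = 2 * g a / g b ^ 3 := by
    have heq : (fun y => deriv (fun y' => f a y') y) =ᶠ[nhds b]
        fun y => 1/2 * (a - 2 - (2 - y) / g y * g a) := by
      filter_upwards [Ioo_mem_nhds hb hb4] with z hz
      exact (f_deriv2 ha ha4 hz.1 hz.2).deriv
    rw [heq.deriv_eq]
    have h := (((gd_hasDeriv hb hb4).mul_const (g a)).const_sub (a - 2)).const_mul (1/2 : ℝ)
    rw [h.deriv]
    field_simp
    ring
  have h3 : deriv (fun y => deriv (fun x => f x y) a) b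
      = 1/2 * (1 - (2 - a) / g a * ((2 - b) / g b)) := by
    have heq : (fun y => deriv (fun x => f x y) a) =ᶠ[nhds b]
        fun y => 1/2 * (y - 2 - (2 - a) / g a * g y) := by
      filter_upwards [Ioo_mem_nhds hb hb4] with z hz
      exact (f_deriv1 ha ha4 hz.1 hz.2).deriv
    rw [heq.deriv_eq]
    have h := (((hasDerivAt_id b).sub_const 2).sub
      ((g_hasDeriv hb hb4).const_mul ((2 - a) / g a))).const_mul (1/2 : ℝ)
    have h' : HasDerivAt (fun y : ℝ => 1/2 * (y - 2 - (2 - a) / g a * g y))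
      (1/2 * (1 - (2 - a) / g a * ((2 - b) / g b))) b := h
    rw [h'.deriv]
  have h4 : deriv (fun x => deriv (fun y => f x y) b) a
      = 1/2 * (1 - (2 - b) / g b * ((2 - a) / g a)) := by
    have heq : (fun x => deriv (fun y => f x y) b) =ᶠ[nhds a]
        fun x => 1/2 * (x - 2 - (2 - b) / g b * g x) := by
      filter_upwards [Ioo_mem_nhds ha ha4] with z hz
      exact (f_deriv2 hz.1 hz.2 hb hb4).deriv
    rw [heq.deriv_eq]
    have h := (((hasDerivAt_id a).sub_const 2).sub
      ((g_hasDeriv ha ha4).const_mul ((2 - b) / g b))).const_mul (1/2 : ℝ)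
    have h' : HasDerivAt (fun x : ℝ => 1/2 * (x - 2 - (2 - b) / g b * g x))
      (1/2 * (1 - (2 - b) / g b * ((2 - a) / g a))) a := h
    rw [h'.deriv]
  rw [h1, h2, h3, h4]
  -- algebra
  set S := Real.sqrt ((4 - a) * (4 - b)) with hS
  set T := Real.sqrt (a * b) with hT
  have hS2 : S ^ 2 = (4 - a) * (4 - b) := Real.sq_sqrt (by nlinarith)
  have hT2 : T ^ 2 = a * b := Real.sq_sqrt (by positivity)
  have hST : S * T = g a * g b := by
    rw [hS, hT]
    unfold g
    rw [← Real.sqrt_mul (by nlinarith), ← Real.sqrt_mul (by nlinarith)]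
    ring_nf
  have hga2 := g_sq ha.le ha4.le
  have hgb2 := g_sq hb.le hb4.le
  have hE : 1/2 * (S - T) ^ 2 - 4 = (2 - a) * (2 - b) - g a * g b := by
    linear_combination hS2 / 2 + hT2 / 2 - hST
  have hSpos : 0 < S := Real.sqrt_pos.2 (by nlinarith)
  have hTpos : 0 < T := Real.sqrt_pos.2 (by positivity)
  have hSgtT : T < S := by
    nlinarith [hS2, hT2]
  have hSlt : S < 4 := by
    nlinarith [hS2, sq_nonneg (a - b)]
  have hx1 : 0 < (S - T) ^ 2 := pow_pos (by linarith) 2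
  have hx2 : (S - T) ^ 2 < 16 := by nlinarith
  have hnum : 0 < 16 - (1/2 * (S - T) ^ 2 - 4) ^ 2 := by
    nlinarith [mul_pos hx1 (by linarith : (0:ℝ) < 16 - (S - T) ^ 2)]
  constructor
  · rw [hE, show (4:ℝ) * a * b * (4 - a) * (4 - b) = 4 * g a ^ 2 * g b ^ 2 from by
      rw [hga2, hgb2]; ring]
    field_simp
    ring
  · exact div_pos hnum
      (mul_pos (mul_pos (mul_pos (mul_pos (by norm_num : (0:ℝ) < 4) ha) hb)
        (by linarith : (0:ℝ) < 4 - a)) (by linarith : (0:ℝ) < 4 - b))
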